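/- Let X be a nonempty compact topological space, T ∈ (0, ∞], and let u : [0,T) × X → ℝ be continuous such that for each x ∈ X the function t ↦ u(t,x) is differentiable in t, with the partial derivative ∂u/∂t continuous on [0,T) × X. Define m(t) = max_{x∈X} u(t,x). Suppose there is a constant c ∈ ℝ such that for every t ∈ [0,T) and every x ∈ X with u(t,x) = m(t), one has ∂u/∂t(t,x) ≤ c. Then m(t) ≤ m(0) + c·t for all t ∈ [0,T). -/

import Mathlib

open Set Filter Topology

section Aux
variable {X : Type*} [TopologicalSpace X] [CompactSpace X] [Nonempty X]

/-- Tube lemma style: bound `f < r` on `{t} × K` propagates to a tube. -/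
private lemma tube_aux {S : Set ℝ} {f : ℝ × X → ℝ}
    (hf : ContinuousOn f (S ×ˢ (univ : Set X))) {t : ℝ} (ht : t ∈ S)
    {K : Set X} (hK : IsCompact K) {r : ℝ} (hbound : ∀ x ∈ K, f (t, x) < r) :
    ∃ V : Set ℝ, IsOpen V ∧ t ∈ V ∧ ∃ U : Set X, IsOpen U ∧ K ⊆ U ∧
      ∀ s ∈ V ∩ S, ∀ x ∈ U, f (s, x) < r := by
  have key : ∀ x ∈ K, ∃ O : Set (ℝ × X), IsOpen O ∧ (t, x) ∈ O ∧
      ∀ p ∈ O ∩ S ×ˢ (univ : Set X), f p < r := by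
    intro x hx
    have hmem : (t, x) ∈ S ×ˢ (univ : Set X) := ⟨ht, mem_univ x⟩
    have hev : f ⁻¹' Iio r ∈ 𝓝[S ×ˢ (univ : Set X)] (t, x) :=
      hf (t, x) hmem (Iio_mem_nhds (hbound x hx))
    rcases mem_nhdsWithin.1 hev with ⟨O, hO, htO, hsub⟩
    exact ⟨O, hO, htO, fun p hp => hsub ⟨hp.1, hp.2⟩⟩
  choose! O hOopen hOmem hObound using key
  have hcover : ({t} : Set ℝ) ×ˢ K ⊆ ⋃ x ∈ K, O x := by
    rintro ⟨s, x⟩ ⟨hs, hx⟩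
    rcases hs with rfl
    exact mem_biUnion hx (hOmem x hx)
  obtain ⟨V, U, hVo, hUo, hVt, hKU, hsub⟩ :=
    generalized_tube_lemma isCompact_singleton hK
      (isOpen_biUnion fun x hx => hOopen x hx) hcover
  refine ⟨V, hVo, hVt rfl, U, hUo, hKU, fun s hs x hx => ?_⟩
  rcases mem_iUnion₂.1 (hsub (show (s, x) ∈ V ×ˢ U from ⟨hs.1, hx⟩)) with ⟨x0, hx0, hmem⟩
  exact hObound x0 hx0 (s, x) ⟨hmem, hs.2, mem_univ x⟩

private lemma max_aux {f : X → ℝ} (hf : Continuous f) :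
    ∃ x, (∀ y, f y ≤ f x) ∧ (⨆ y, f y) = f x := by
  obtain ⟨x, -, hx⟩ := isCompact_univ.exists_isMaxOn univ_nonempty hf.continuousOn
  have hle : ∀ y, f y ≤ f x := fun y => hx (mem_univ y)
  refine ⟨x, hle, le_antisymm (ciSup_le hle) (le_ciSup ⟨f x, ?_⟩ x)⟩
  rintro _ ⟨y, rfl⟩; exact hle y

private lemma slice_cont {S : Set ℝ} {u : ℝ → X → ℝ}
    (hu : ContinuousOn (fun p : ℝ × X => u p.1 p.2) (S ×ˢ (univ : Set X)))
    {s : ℝ} (hs : s ∈ S) : Continuous (u s) := by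
  rw [← continuousOn_univ]
  exact hu.comp ((continuous_const.prodMk continuous_id).continuousOn)
    (fun x _ => ⟨hs, mem_univ x⟩)

private lemma time_cont {S : Set ℝ} {u : ℝ → X → ℝ}
    (hu : ContinuousOn (fun p : ℝ × X => u p.1 p.2) (S ×ˢ (univ : Set X)))
    (x : X) : ContinuousOn (fun s => u s x) S :=
  hu.comp ((continuous_id.prodMk continuous_const).continuousOn)
    (fun s hs => ⟨hs, mem_univ x⟩)

private lemma m_cont {S : Set ℝ} {u : ℝ → X → ℝ}
    (hu : ContinuousOn (fun p : ℝ × X => u p.1 p.2) (S ×ˢ (univ : Set X))) :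
    ContinuousOn (fun s => ⨆ x, u s x) S := by
  intro t ht
  obtain ⟨xt, hxt, hmt⟩ := max_aux (slice_cont hu ht)
  refine tendsto_order.2 ⟨?_, ?_⟩
  · intro a ha
    have h1 : ∀ᶠ s in 𝓝[S] t, a < u s xt :=
      time_cont hu xt t ht (Ioi_mem_nhds (ha.trans_le hmt.le))
    filter_upwards [h1, self_mem_nhdsWithin] with s hs1 hs2
    obtain ⟨xs, hxs, hms⟩ := max_aux (slice_cont hu hs2)
    calc a < u s xt := hs1
      _ ≤ u s xs := hxs xt
      _ = _ := hms.symm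
  · intro a ha
    have hra : ((⨆ x, u t x) + a) / 2 < a := by linarith
    obtain ⟨V, hVo, htV, U, hUo, hUuniv, hP⟩ :=
      tube_aux hu ht isCompact_univ (r := ((⨆ x, u t x) + a) / 2)
        (fun x _ => by
          have : u t x ≤ ⨆ y, u t y := hmt ▸ hxt x
          linarith)
    filter_upwards [mem_nhdsWithin_of_mem_nhds (hVo.mem_nhds htV),
      self_mem_nhdsWithin] with s hsV hsS
    have : (⨆ x, u s x) ≤ ((⨆ x, u t x) + a) / 2 :=
      ciSup_le fun x => (hP s ⟨hsV, hsS⟩ x (hUuniv (mem_univ x))).le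
    linarith

private lemma transfer_aux {S : Set ℝ} {t t0 : ℝ} (h : Ioc t t0 ⊆ S) (htt0 : t < t0)
    {p : ℝ → Prop} (hp : ∀ᶠ s in 𝓝[S] t, p s) : ∀ᶠ z in 𝓝[>] t, p z := by
  rcases mem_nhdsWithin.1 hp with ⟨O, hO, htO, hsub⟩
  filter_upwards [mem_nhdsWithin_of_mem_nhds (hO.mem_nhds htO),
    Ioc_mem_nhdsGT_of_mem ⟨le_rfl, htt0⟩] with z h1 h2
  exact hsub ⟨h1, h h2⟩

end Aux

/-- Hamilton's trick / maximum principle at the spatial maximum. `X` is a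
nonempty compact space, `T ∈ (0, ∞]`, `u` is continuous on `[0,T) × X` and differentiable
in `t` with continuous time derivative `u'`; if at every spatial maximum point the time
derivative is `≤ c`, then `m(t) := max_x u(t,x)` satisfies `m(t) ≤ m(0) + c·t`. -/
theorem stmt_4 (X : Type*) [TopologicalSpace X] [CompactSpace X] [Nonempty X]
    (T : EReal) (hT : 0 < T) (u u' : ℝ → X → ℝ) (c : ℝ)
    (hu : ContinuousOn (fun p : ℝ × X => u p.1 p.2)
      ({t : ℝ | 0 ≤ t ∧ (t : EReal) < T} ×ˢ (univ : Set X)))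
    (hu' : ContinuousOn (fun p : ℝ × X => u' p.1 p.2)
      ({t : ℝ | 0 ≤ t ∧ (t : EReal) < T} ×ˢ (univ : Set X)))
    (hderiv : ∀ (t : ℝ) (x : X), 0 ≤ t → (t : EReal) < T →
      HasDerivWithinAt (fun s : ℝ => u s x) (u' t x) {s : ℝ | 0 ≤ s ∧ (s : EReal) < T} t)
    (hmax : ∀ (t : ℝ) (x : X), 0 ≤ t → (t : EReal) < T →
      u t x = (⨆ y : X, u t y) → u' t x ≤ c) :
    ∀ t : ℝ, 0 ≤ t → (t : EReal) < T →
      (⨆ x : X, u t x) ≤ (⨆ x : X, u 0 x) + c * t := by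
  intro t0 h0 hT0
  set S : Set ℝ := {t : ℝ | 0 ≤ t ∧ (t : EReal) < T} with hS
  set m : ℝ → ℝ := fun s => ⨆ x, u s x with hm
  have hIccS : Icc 0 t0 ⊆ S := by
    intro s hs
    exact ⟨hs.1, lt_of_le_of_lt (by exact_mod_cast hs.2) hT0⟩
  -- the key slope bound
  have bound : ∀ t ∈ Ico (0 : ℝ) t0, ∀ r, c < r → ∃ᶠ z in 𝓝[>] t, slope m t z < r := by
    intro t ht r hr
    have htS : t ∈ S := hIccS ⟨ht.1, ht.2.le⟩
    have htt0 : t < t0 := ht.2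
    have hIocS : Ioc t t0 ⊆ S := fun z hz => hIccS ⟨ht.1.trans hz.1.le, hz.2⟩
    obtain ⟨xt, hxt, hmt⟩ := max_aux (slice_cont hu htS)
    -- maximizer set K
    have hKcl : IsClosed {x | u t x = m t} := isClosed_eq (slice_cont hu htS) continuous_const
    have hKbound : ∀ x ∈ {x | u t x = m t}, u' t x < r := fun x hx =>
      lt_of_le_of_lt (hmax t x ht.1 htS.2 hx) hr
    obtain ⟨V₁, hV₁o, htV₁, U, hUo, hKU, hP₁⟩ := tube_aux hu' htS hKcl.isCompact hKbound
    obtain ⟨δ, hδ, hball⟩ := Metric.isOpen_iff.1 hV₁o t htV₁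
    rw [Real.ball_eq_Ioo] at hball
    have hzS : ∀ᶠ z in 𝓝[>] t, z ∈ S := by
      filter_upwards [Ioc_mem_nhdsGT_of_mem ⟨le_rfl, htt0⟩] with z hz
      exact hIocS hz
    -- every nearby maximizer lies in U
    have hKey : ∀ᶠ z in 𝓝[>] t, ∃ x ∈ U, (∀ y, u z y ≤ u z x) ∧ m z = u z x := by
      by_cases hC : (Uᶜ : Set X).Nonempty
      · have hCcomp : IsCompact (Uᶜ : Set X) :=
          isCompact_univ.of_isClosed_subset (isClosed_compl_iff.2 hUo) (subset_univ _)
        obtain ⟨xC, hxCmem, hxC⟩ :=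
          hCcomp.exists_isMaxOn hC (slice_cont hu htS).continuousOn
        have hxCK : xC ∉ {x | u t x = m t} := fun h => hxCmem (hKU h)
        have hxClt : u t xC < m t := lt_of_le_of_ne ((hxt xC).trans hmt.ge) hxCK
        have h1 : u t xC < (u t xC + m t) / 2 := by linarith
        have h2 : (u t xC + m t) / 2 < m t := by linarith
        obtain ⟨V₂, hV₂o, htV₂, U₂, hCU₂sub, hCU₂, hP₂⟩ :=
          tube_aux hu htS hCcomp (fun x hx => lt_of_le_of_lt (hxC hx) h1)
        have h3 : ∀ᶠ z in 𝓝[>] t, (u t xC + m t) / 2 < u z xt := by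
          refine transfer_aux hIocS htt0 ?_
          exact time_cont hu xt t htS (Ioi_mem_nhds (h2.trans_le hmt.le))
        filter_upwards [hzS, h3,
          mem_nhdsWithin_of_mem_nhds (hV₂o.mem_nhds htV₂)] with z hzS' h3' hzV₂
        obtain ⟨xz, hxz, hmz⟩ := max_aux (slice_cont hu hzS')
        refine ⟨xz, ?_, hxz, hmz⟩
        by_contra hxzU
        have hlt : u z xz < (u t xC + m t) / 2 := hP₂ z ⟨hzV₂, hzS'⟩ xz (hCU₂ hxzU)
        have : (u t xC + m t) / 2 < u z xz := h3'.trans_le (hxz xt)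
        linarith
      · have hall : ∀ x, x ∈ U := fun x => by
          by_contra hx; exact hC ⟨x, hx⟩
        filter_upwards [hzS] with z hzS'
        obtain ⟨xz, hxz, hmz⟩ := max_aux (slice_cont hu hzS')
        exact ⟨xz, hall xz, hxz, hmz⟩
    -- conclude the slope bound via the mean value theorem
    refine Filter.Eventually.frequently ?_
    filter_upwards [hKey,
      Ioo_mem_nhdsGT_of_mem ⟨le_rfl, lt_min (show t < t + δ by linarith) htt0⟩] with z hKz hz
    obtain ⟨xz, hxzU, hxz, hmz⟩ := hKz
    have htz : t < z := hz.1
    have hzδ : z < t + δ := lt_of_lt_of_le hz.2 (min_le_left _ _)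
    have hzt0 : z < t0 := lt_of_lt_of_le hz.2 (min_le_right _ _)
    have hIcczS : Icc t z ⊆ S := fun w hw =>
      hIccS ⟨ht.1.trans hw.1, hw.2.trans hzt0.le⟩
    have hIoozS : Ioo (0 : ℝ) z ⊆ S := fun w hw =>
      hIccS ⟨hw.1.le, (hw.2.trans hzt0).le⟩
    have hcont : ContinuousOn (fun s => u s xz) (Icc t z) := fun s hs =>
      ((hderiv s xz (hIcczS hs).1 (hIcczS hs).2).continuousWithinAt).mono hIcczS
    have hdiff : ∀ s ∈ Ioo t z, HasDerivAt (fun s => u s xz) (u' s xz) s := by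
      intro s hs
      have hsS : s ∈ S := hIcczS ⟨hs.1.le, hs.2.le⟩
      refine (hderiv s xz hsS.1 hsS.2).hasDerivAt ?_
      exact mem_nhds_iff.2 ⟨Ioo 0 z, hIoozS, isOpen_Ioo,
        ⟨lt_of_le_of_lt ht.1 hs.1, hs.2⟩⟩
    obtain ⟨ξ, hξ, hslope⟩ :=
      exists_hasDerivAt_eq_slope (fun s => u s xz) (fun s => u' s xz) htz hcont hdiff
    have hξV₁ : ξ ∈ V₁ := hball ⟨by linarith [hξ.1], by linarith [hξ.2]⟩
    have hξS : ξ ∈ S := hIcczS ⟨hξ.1.le, hξ.2.le⟩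
    have hur : u' ξ xz < r := hP₁ ξ ⟨hξV₁, hξS⟩ xz hxzU
    rw [slope_def_field]
    have hnum : m z - m t ≤ u z xz - u t xz := by
      have h1 : u t xz ≤ m t := (hxt xz).trans hmt.ge
      have h2 : m z = u z xz := hmz
      linarith
    calc (m z - m t) / (z - t) ≤ (u z xz - u t xz) / (z - t) :=
          (div_le_div_iff_of_pos_right (sub_pos.2 htz)).2 hnum
      _ = u' ξ xz := hslope.symm
      _ < r := hur
  -- apply the fencing theorem
  have main := image_le_of_liminf_slope_right_le_deriv_boundary
    (f := m) (B := fun s => m 0 + c * s) (B' := fun _ => c) (a := 0) (b := t0)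
    ((m_cont hu).mono hIccS)
    (by simp)
    ((continuous_const.add (continuous_const.mul continuous_id)).continuousOn)
    (fun x _ => by
      simpa using ((hasDerivWithinAt_id x (Ici x)).const_mul c).const_add (m 0))
    bound
  exact main ⟨h0, le_rfl⟩
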